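/- There exist pure states |ψ_AB⟩, |ψ_AC⟩, |ψ_BC⟩ on ℂ²⊗ℂ² such that the sum of the three largest eigenvalues of H = (1/6)(|ψ_AB⟩⟨ψ_AB|⊗I_C + (|ψ_AC⟩⟨ψ_AC| acting on qubits A,C)⊗I_B + I_A⊗|ψ_BC⟩⟨ψ_BC|) strictly exceeds 5/6. Consequently H is not majorized by H_target, whose top three eigenvalues sum to 5/6. -/

import Mathlib

open Matrix Finset ComplexOrder

noncomputable section

abbrev Q3 : Type := Fin 2 × Fin 2 × Fin 2

/-- Ky Fan `r`-sum: the largest possible sum of `r` eigenvalues of a Hermitian matrix. -/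
noncomputable def kyFan {n : Type*} [Fintype n] [DecidableEq n]
    {A : Matrix n n ℂ} (hA : A.IsHermitian) (r : ℕ) : ℝ :=
  sSup {x : ℝ | ∃ s : Finset n, s.card = r ∧ x = ∑ i ∈ s, hA.eigenvalues i}

/-- Eigenvalue majorization of Hermitian matrices. -/
def Majorized {n : Type*} [Fintype n] [DecidableEq n]
    {A B : Matrix n n ℂ} (hA : A.IsHermitian) (hB : B.IsHermitian) : Prop :=
  (∀ r : ℕ, kyFan hA r ≤ kyFan hB r) ∧ A.trace = B.trace

/-- Eigenvalues of a Hermitian matrix sorted in nonincreasing order. -/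
noncomputable def sortedEigDesc {n : ℕ} {A : Matrix (Fin n) (Fin n) ℂ}
    (hA : A.IsHermitian) : Fin n → ℝ :=
  fun i => (hA.eigenvalues ∘ Tuple.sort hA.eigenvalues) i.rev

def IsDensity {n : Type*} [Fintype n] [DecidableEq n] (ρ : Matrix n n ℂ) : Prop :=
  ρ.PosSemidef ∧ ρ.trace = 1

def P0 : Matrix (Fin 2) (Fin 2) ℂ := fun i j => if i = 0 ∧ j = 0 then 1 else 0

def P00 : Matrix (Fin 2 × Fin 2) (Fin 2 × Fin 2) ℂ :=
  fun p q => P0 p.1 q.1 * P0 p.2 q.2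

/-- Projector onto a pure two-qubit state. -/
def proj2 (v : Fin 2 × Fin 2 → ℂ) : Matrix (Fin 2 × Fin 2) (Fin 2 × Fin 2) ℂ :=
  fun p q => v p * (starRingEnd ℂ) (v q)

/-- Projector onto a pure three-qubit state. -/
def projQ3 (v : Q3 → ℂ) : Matrix Q3 Q3 ℂ :=
  fun p q => v p * (starRingEnd ℂ) (v q)

/-- Embed a two-body operator on qubits A,B, acting as identity on C. -/
def embAB (M : Matrix (Fin 2 × Fin 2) (Fin 2 × Fin 2) ℂ) : Matrix Q3 Q3 ℂ :=
  fun p q => M (p.1, p.2.1) (q.1, q.2.1) * (if p.2.2 = q.2.2 then 1 else 0)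

/-- Embed a two-body operator on qubits A,C, acting as identity on B. -/
def embAC (M : Matrix (Fin 2 × Fin 2) (Fin 2 × Fin 2) ℂ) : Matrix Q3 Q3 ℂ :=
  fun p q => M (p.1, p.2.2) (q.1, q.2.2) * (if p.2.1 = q.2.1 then 1 else 0)

/-- Embed a two-body operator on qubits B,C, acting as identity on A. -/
def embBC (M : Matrix (Fin 2 × Fin 2) (Fin 2 × Fin 2) ℂ) : Matrix Q3 Q3 ℂ :=
  fun p q => M p.2 q.2 * (if p.1 = q.1 then 1 else 0)

def embA (M : Matrix (Fin 2) (Fin 2) ℂ) : Matrix Q3 Q3 ℂ :=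
  fun p q => M p.1 q.1 * (if p.2 = q.2 then 1 else 0)

def embB (M : Matrix (Fin 2) (Fin 2) ℂ) : Matrix Q3 Q3 ℂ :=
  fun p q => M p.2.1 q.2.1 * (if (p.1, p.2.2) = (q.1, q.2.2) then 1 else 0)

def embC (M : Matrix (Fin 2) (Fin 2) ℂ) : Matrix Q3 Q3 ℂ :=
  fun p q => M p.2.2 q.2.2 * (if (p.1, p.2.1) = (q.1, q.2.1) then 1 else 0)

def margA (ρ : Matrix Q3 Q3 ℂ) : Matrix (Fin 2) (Fin 2) ℂ :=
  fun i j => ∑ b : Fin 2, ∑ c : Fin 2, ρ (i, b, c) (j, b, c)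

def margB (ρ : Matrix Q3 Q3 ℂ) : Matrix (Fin 2) (Fin 2) ℂ :=
  fun i j => ∑ a : Fin 2, ∑ c : Fin 2, ρ (a, i, c) (a, j, c)

def margC (ρ : Matrix Q3 Q3 ℂ) : Matrix (Fin 2) (Fin 2) ℂ :=
  fun i j => ∑ a : Fin 2, ∑ b : Fin 2, ρ (a, b, i) (a, b, j)

def margAB (ρ : Matrix Q3 Q3 ℂ) : Matrix (Fin 2 × Fin 2) (Fin 2 × Fin 2) ℂ :=
  fun p q => ∑ c : Fin 2, ρ (p.1, p.2, c) (q.1, q.2, c)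

def margAC (ρ : Matrix Q3 Q3 ℂ) : Matrix (Fin 2 × Fin 2) (Fin 2 × Fin 2) ℂ :=
  fun p q => ∑ b : Fin 2, ρ (p.1, b, p.2) (q.1, b, q.2)

def margBC (ρ : Matrix Q3 Q3 ℂ) : Matrix (Fin 2 × Fin 2) (Fin 2 × Fin 2) ℂ :=
  fun p q => ∑ a : Fin 2, ρ (a, p.1, p.2) (a, q.1, q.2)

def sigmaY : Matrix (Fin 2) (Fin 2) ℂ := !![0, -Complex.I; Complex.I, 0]

/-- The alignment target `H_target = (1/6)(P₀⊗P₀⊗I + P₀⊗I⊗P₀ + I⊗P₀⊗P₀)`. -/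
def Htarget : Matrix Q3 Q3 ℂ := (1/6 : ℂ) • (embAB P00 + embAC P00 + embBC P00)

/-- The alignment operator built from three two-body pure states. -/
def Hof (u v w : Fin 2 × Fin 2 → ℂ) : Matrix Q3 Q3 ℂ :=
  (1/6 : ℂ) • (embAB (proj2 u) + embAC (proj2 v) + embBC (proj2 w))

end


section AuxLemmas
open Matrix Finset ComplexOrder


lemma comb_exists {n : Type*} [Fintype n] [DecidableEq n] (lam c : n → ℝ)
    (hc0 : ∀ i, 0 ≤ c i) (hc1 : ∀ i, c i ≤ 1) (k : ℕ) (hck : ∑ i, c i = k) :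
    ∃ s : Finset n, s.card = k ∧ ∑ i, lam i * c i ≤ ∑ i ∈ s, lam i := by
  have hkn : k ≤ Fintype.card n := by
    have h1 : (k : ℝ) ≤ Fintype.card n := by
      rw [← hck]
      calc ∑ i, c i ≤ ∑ _i : n, (1:ℝ) := Finset.sum_le_sum fun i _ => hc1 i
        _ = Fintype.card n := by simp
    exact_mod_cast h1
  obtain ⟨s₀, _, hs₀⟩ := Finset.exists_subset_card_eq (s := (univ : Finset n)) (n := k) (by simpa using hkn)
  set T : Finset (Finset n) := (univ : Finset (Finset n)).filter (fun s => s.card = k) with hT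
  have hTne : T.Nonempty := ⟨s₀, by simp [hT, hs₀]⟩
  obtain ⟨s, hsT, hmax⟩ := T.exists_max_image (fun s => ∑ i ∈ s, lam i) hTne
  have hscard : s.card = k := by simpa [hT] using hsT
  have key : ∀ i ∈ s, ∀ j, j ∉ s → lam j ≤ lam i := by
    intro i hi j hj
    by_contra hlt
    push_neg at hlt
    have hjne : j ∉ s.erase i := fun h => hj (Finset.mem_of_mem_erase h)
    have hcard' : (insert j (s.erase i)).card = k := by
      rw [Finset.card_insert_of_notMem hjne, Finset.card_erase_of_mem hi]
      have : 1 ≤ s.card := Finset.card_pos.mpr ⟨i, hi⟩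
      omega
    have hgt : ∑ x ∈ s, lam x < ∑ x ∈ insert j (s.erase i), lam x := by
      rw [Finset.sum_insert hjne]
      have := Finset.add_sum_erase s lam hi
      linarith
    exact absurd (hmax _ (by simp [hT, hcard'])) (not_le.mpr hgt)
  rcases Nat.eq_zero_or_pos k with hk0 | hkpos
  · refine ⟨s, hscard, ?_⟩
    have hc_zero : ∀ i ∈ (univ : Finset n), c i = 0 := by
      rw [← Finset.sum_eq_zero_iff_of_nonneg (fun i _ => hc0 i)]
      rw [hck, hk0]; simp
    have h0 : ∑ i, lam i * c i = 0 :=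
      Finset.sum_eq_zero fun i hi => by rw [hc_zero i hi, mul_zero]
    rw [h0]
    have : s = ∅ := Finset.card_eq_zero.mp (by rw [hscard, hk0])
    simp [this]
  · have hsne : s.Nonempty := Finset.card_pos.mp (by omega)
    obtain ⟨i₀, hi₀, hmin⟩ := s.exists_min_image lam hsne
    set m := lam i₀ with hm
    have hout : ∀ j ∉ s, lam j ≤ m := fun j hj => key i₀ hi₀ j hj
    have hsplit : ∑ i, lam i * c i = ∑ i ∈ s, lam i * c i + ∑ i ∈ sᶜ, lam i * c i :=
      (Finset.sum_add_sum_compl s _).symm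
    have hcs : ∑ i ∈ s, c i + ∑ i ∈ sᶜ, c i = k := by
      rw [Finset.sum_add_sum_compl, hck]
    have h1 : ∑ i ∈ sᶜ, lam i * c i ≤ ∑ i ∈ sᶜ, m * c i :=
      Finset.sum_le_sum fun i hi =>
        mul_le_mul_of_nonneg_right (hout i (by simpa using hi)) (hc0 i)
    have h2 : ∑ i ∈ sᶜ, m * c i = m * ((k:ℝ) - ∑ i ∈ s, c i) := by
      rw [← Finset.mul_sum]; congr 1; linarith
    have h3 : ∑ i ∈ s, lam i * c i + m * ((k:ℝ) - ∑ i ∈ s, c i) ≤ ∑ i ∈ s, lam i := by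
      have hrw : m * ((k:ℝ) - ∑ i ∈ s, c i) = ∑ i ∈ s, m * (1 - c i) := by
        simp only [mul_sub, mul_one]
        rw [Finset.sum_sub_distrib, Finset.sum_const, hscard, ← Finset.mul_sum,
          nsmul_eq_mul]
        ring
      rw [hrw, ← Finset.sum_add_distrib]
      refine Finset.sum_le_sum fun i hi => ?_
      nlinarith [hmin i hi, hc1 i, hc0 i]
    refine ⟨s, hscard, ?_⟩
    linarith



variable {n : Type*} [Fintype n] [DecidableEq n] {A : Matrix n n ℂ}

lemma trace_eq_sum_eigs (hA : A.IsHermitian) :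
    A.trace = ∑ i, (hA.eigenvalues i : ℂ) := by
  conv_lhs => rw [hA.spectral_theorem]
  rw [Unitary.conjStarAlgAut_apply, Matrix.trace_mul_cycle,
    Matrix.mem_unitaryGroup_iff'.mp (Matrix.IsHermitian.eigenvectorUnitary hA).2, one_mul,
    Matrix.trace_diagonal]
  rfl

lemma trace_sq_eq_sum_eigs (hA : A.IsHermitian) :
    (A * A).trace = ∑ i, ((hA.eigenvalues i : ℂ)) ^ 2 := by
  set U : Matrix n n ℂ := (Matrix.IsHermitian.eigenvectorUnitary hA : Matrix n n ℂ) with hU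
  have hU1 : star U * U = 1 :=
    Matrix.mem_unitaryGroup_iff'.mp (Matrix.IsHermitian.eigenvectorUnitary hA).2
  set D : Matrix n n ℂ := diagonal (RCLike.ofReal ∘ hA.eigenvalues) with hD
  have hspec : A = U * D * star U := hA.spectral_theorem
  conv_lhs => rw [hspec]
  have : U * D * star U * (U * D * star U) = U * (D * D) * star U := by
    simp only [Matrix.mul_assoc]
    rw [← Matrix.mul_assoc (star U) U, hU1, one_mul, ← Matrix.mul_assoc D D]
  rw [this, Matrix.trace_mul_cycle, hU1, one_mul, hD, Matrix.diagonal_mul_diagonal,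
    Matrix.trace_diagonal]
  simp [pow_two]

lemma eig_root (hA : A.IsHermitian) (c1 c2 : ℝ)
    (h : A * (A - (c1 : ℂ) • 1) * (A - (c2 : ℂ) • 1) = 0) (i : n) :
    hA.eigenvalues i = 0 ∨ hA.eigenvalues i = c1 ∨ hA.eigenvalues i = c2 := by
  set t := hA.eigenvalues i with ht
  set v : n → ℂ := ⇑(hA.eigenvectorBasis i) with hv
  have hv0 : v ≠ 0 := by
    have h0 := hA.eigenvectorBasis.orthonormal.ne_zero i
    intro hc
    exact h0 (by ext j; exact congrFun hc j)
  have hAv : A *ᵥ v = (t : ℂ) • v := by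
    have := hA.mulVec_eigenvectorBasis i
    rw [← hv] at this
    rw [this]
    funext p
    simp [Complex.real_smul, ht]
  have h1 : (A - (c1 : ℂ) • 1) *ᵥ v = ((t : ℂ) - c1) • v := by
    rw [Matrix.sub_mulVec, hAv, Matrix.smul_mulVec, Matrix.one_mulVec, sub_smul]
  have h2 : (A - (c2 : ℂ) • 1) *ᵥ v = ((t : ℂ) - c2) • v := by
    rw [Matrix.sub_mulVec, hAv, Matrix.smul_mulVec, Matrix.one_mulVec, sub_smul]
  have hzero : ((t : ℂ) * ((t : ℂ) - c1) * ((t : ℂ) - c2)) • v = 0 := by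
    have : (A * (A - (c1 : ℂ) • 1) * (A - (c2 : ℂ) • 1)) *ᵥ v = 0 := by rw [h]; simp
    rw [← Matrix.mulVec_mulVec, ← Matrix.mulVec_mulVec, h2, Matrix.mulVec_smul, h1,
      Matrix.mulVec_smul, Matrix.mulVec_smul, hAv] at this
    rw [← this]
    rw [smul_smul, smul_smul]
    congr 1
    ring
  rcases smul_eq_zero.mp hzero with hs | hs
  · rcases mul_eq_zero.mp hs with hs2 | hs2
    · rcases mul_eq_zero.mp hs2 with hs3 | hs3
      · left; exact_mod_cast hs3
      · right; left
        have : (t : ℂ) = c1 := by linear_combination hs3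
        exact_mod_cast this
    · right; right
      have : (t : ℂ) = c2 := by linear_combination hs2
      exact_mod_cast this
  · exact absurd hs hv0

lemma kyFan_trace_le (hA : A.IsHermitian) (P : Matrix n n ℂ) (hP : P.IsHermitian)
    (hP2 : P * P = P) (k : ℕ) (htr : P.trace = k) :
    ∃ s : Finset n, s.card = k ∧ ((A * P).trace).re ≤ ∑ i ∈ s, hA.eigenvalues i := by
  set U : Matrix n n ℂ := (Matrix.IsHermitian.eigenvectorUnitary hA : Matrix n n ℂ) with hU
  have hU1 : star U * U = 1 :=
    Matrix.mem_unitaryGroup_iff'.mp (Matrix.IsHermitian.eigenvectorUnitary hA).2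
  have hU2 : U * star U = 1 :=
    Matrix.mem_unitaryGroup_iff.mp (Matrix.IsHermitian.eigenvectorUnitary hA).2
  set D : Matrix n n ℂ := diagonal (RCLike.ofReal ∘ hA.eigenvalues) with hD
  have hspec : A = U * D * star U := hA.spectral_theorem
  set Q : Matrix n n ℂ := star U * P * U with hQ
  have hQher : Q.IsHermitian := by
    unfold Matrix.IsHermitian
    rw [hQ, Matrix.conjTranspose_mul, Matrix.conjTranspose_mul, ← Matrix.star_eq_conjTranspose U,
      Matrix.star_eq_conjTranspose, Matrix.conjTranspose_conjTranspose, hP.eq, Matrix.mul_assoc]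
  have hQ2 : Q * Q = Q := by
    rw [hQ]
    simp only [Matrix.mul_assoc]
    rw [← Matrix.mul_assoc U (star U) (P * U), hU2, one_mul, ← Matrix.mul_assoc P P U, hP2]
  have hQpsd : Q.PosSemidef := by
    have h : Q = Qᴴ * Q := by
      conv_lhs => rw [← hQ2]
      rw [hQher]
    rw [h]
    exact Matrix.posSemidef_conjTranspose_mul_self Q
  have hRher : (1 - Q).IsHermitian := (Matrix.isHermitian_one).sub hQher
  have hR2 : (1 - Q) * (1 - Q) = 1 - Q := by
    rw [sub_mul, one_mul, mul_sub, mul_one, hQ2, sub_self, sub_zero]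
  have hRpsd : (1 - Q).PosSemidef := by
    have h : (1 - Q) = (1 - Q)ᴴ * (1 - Q) := by
      conv_lhs => rw [← hR2]
      rw [hRher]
    rw [h]
    exact Matrix.posSemidef_conjTranspose_mul_self _
  set c : n → ℝ := fun j => (Q j j).re with hc
  have hc0 : ∀ j, 0 ≤ c j := by
    intro j
    have h := hQpsd.re_dotProduct_nonneg (Pi.single j 1)
    simpa [Matrix.mulVec_single, dotProduct, Pi.single_apply, Finset.sum_ite_eq,
      single_dotProduct] using h
  have hc1 : ∀ j, c j ≤ 1 := by
    intro j
    have h := hRpsd.re_dotProduct_nonneg (Pi.single j 1)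
    have h' : 0 ≤ 1 - (Q j j).re := by
      simpa [Matrix.sub_mulVec, Matrix.one_mulVec, dotProduct_sub,
        Matrix.mulVec_single, dotProduct, Pi.single_apply, Finset.sum_ite_eq,
        single_dotProduct, Complex.sub_re] using h
    simp only [hc]
    linarith
  have hQtr : Q.trace = (k : ℂ) := by
    rw [hQ, Matrix.trace_mul_cycle, hU2, one_mul, htr]
  have hcsum : ∑ j, c j = (k : ℝ) := by
    have h : (Q.trace).re = (k : ℝ) := by rw [hQtr]; simp
    rw [← h]
    simp only [Matrix.trace, Matrix.diag, hc]
    exact (Complex.re_sum _ _).symm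
  have hmain : ((A * P).trace).re = ∑ j, hA.eigenvalues j * c j := by
    have h : (A * P).trace = ∑ j, Q j j * ((hA.eigenvalues j : ℝ) : ℂ) := by
      conv_lhs => rw [hspec]
      rw [Matrix.mul_assoc (U * D) (star U) P, Matrix.trace_mul_cycle U D (star U * P),
        ← hQ, hD]
      simp [Matrix.trace, Matrix.diag, Matrix.mul_diagonal]
    rw [h, Complex.re_sum]
    refine Finset.sum_congr rfl fun j _ => ?_
    simp only [hc, Complex.mul_re, Complex.ofReal_re, Complex.ofReal_im, mul_zero, sub_zero]
    ring
  obtain ⟨s, hs, hle⟩ := comb_exists hA.eigenvalues c hc0 hc1 k hcsum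
  exact ⟨s, hs, by rw [hmain]; exact hle⟩

end AuxLemmas

noncomputable section AuxDefs
open Matrix Finset ComplexOrder

def cuq : Fin 2 × Fin 2 → ℚ := fun p => ![![0, 6], ![-9, -10]] p.1 p.2
def cvq : Fin 2 × Fin 2 → ℚ := fun p => ![![-2, -4], ![-1, 5]] p.1 p.2
def cwq : Fin 2 × Fin 2 → ℚ := fun p => ![![-6, -1], ![-4, 0]] p.1 p.2

def uu : Fin 2 × Fin 2 → ℂ := fun p => (((cuq p : ℝ) / Real.sqrt 217 : ℝ) : ℂ)
def vv : Fin 2 × Fin 2 → ℂ := fun p => (((cvq p : ℝ) / Real.sqrt 46 : ℝ) : ℂ)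
def ww : Fin 2 × Fin 2 → ℂ := fun p => (((cwq p : ℝ) / Real.sqrt 53 : ℝ) : ℂ)

lemma proj2_gen (cq : Fin 2 × Fin 2 → ℚ) (N : ℝ) (M : ℚ) (hNM : (M : ℝ) = N)
    (hN : (0:ℝ) < N) :
    proj2 (fun p => (((cq p : ℝ) / Real.sqrt N : ℝ) : ℂ)) =
      fun p q => ((cq p * cq q / M : ℚ) : ℂ) := by
  funext p q
  simp only [proj2, Complex.conj_ofReal, ← Complex.ofReal_mul]
  congr 1
  rw [div_mul_div_comm, Real.mul_self_sqrt hN.le]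
  push_cast [hNM]
  ring

def hmq : Q3 → Q3 → ℚ := fun p q =>
  (cuq (p.1, p.2.1) * cuq (q.1, q.2.1) / 217 * (if p.2.2 = q.2.2 then 1 else 0)
   + cvq (p.1, p.2.2) * cvq (q.1, q.2.2) / 46 * (if p.2.1 = q.2.1 then 1 else 0)
   + cwq p.2 * cwq q.2 / 53 * (if p.1 = q.1 then 1 else 0)) / 6

lemma Hof_eq : Hof uu vv ww = fun p q => ((hmq p q : ℚ) : ℂ) := by
  have h1 : proj2 uu = fun p q => ((cuq p * cuq q / 217 : ℚ) : ℂ) :=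
    proj2_gen cuq 217 217 (by norm_num) (by norm_num)
  have h2 : proj2 vv = fun p q => ((cvq p * cvq q / 46 : ℚ) : ℂ) :=
    proj2_gen cvq 46 46 (by norm_num) (by norm_num)
  have h3 : proj2 ww = fun p q => ((cwq p * cwq q / 53 : ℚ) : ℂ) :=
    proj2_gen cwq 53 53 (by norm_num) (by norm_num)
  funext p q
  simp only [Hof, h1, h2, h3, Matrix.smul_apply, Matrix.add_apply,
    embAB, embAC, embBC, hmq, smul_eq_mul]
  split_ifs <;> push_cast <;> ring

def y1 : Q3 → ℚ := fun p => ![![![6,4],![8,9]],![![-9,-11],![-7,-12]]] p.1 p.2.1 p.2.2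
def y2 : Q3 → ℚ := fun p => ![![![562,868],![-632,1731]],![![4485,-1721],![3883,-2604]]] p.1 p.2.1 p.2.2
def y3 : Q3 → ℚ := fun p => ![![![2622626,1629453],![792464,-1253638]],![![655915,-903172],![-15231,1787401]]] p.1 p.2.1 p.2.2

def xv1 : Q3 → ℂ := fun p => ((y1 p : ℚ) : ℂ)
def xv2 : Q3 → ℂ := fun p => ((y2 p : ℚ) : ℂ)
def xv3 : Q3 → ℂ := fun p => ((y3 p : ℚ) : ℂ)

lemma d11 : xv1 ⬝ᵥ xv1 = (592 : ℂ) := by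
  simp [dotProduct, xv1, y1, Fintype.sum_prod_type, Fin.sum_univ_two]
  norm_num

lemma d22 : xv2 ⬝ᵥ xv2 = (49400624 : ℂ) := by
  simp [dotProduct, xv2, y2, Fintype.sum_prod_type, Fin.sum_univ_two]
  norm_num

lemma d33 : xv3 ⬝ᵥ xv3 = (16173870108396 : ℂ) := by
  simp [dotProduct, xv3, y3, Fintype.sum_prod_type, Fin.sum_univ_two]
  norm_num

lemma d12 : xv1 ⬝ᵥ xv2 = 0 := by
  simp [dotProduct, xv1, xv2, y1, y2, Fintype.sum_prod_type, Fin.sum_univ_two]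
  norm_num

lemma d13 : xv1 ⬝ᵥ xv3 = 0 := by
  simp [dotProduct, xv1, xv3, y1, y3, Fintype.sum_prod_type, Fin.sum_univ_two]
  norm_num

lemma d23 : xv2 ⬝ᵥ xv3 = 0 := by
  simp [dotProduct, xv2, xv3, y2, y3, Fintype.sum_prod_type, Fin.sum_univ_two]
  norm_num


def Pmat : Matrix Q3 Q3 ℂ :=
  (592 : ℂ)⁻¹ • vecMulVec xv1 xv1 + (49400624 : ℂ)⁻¹ • vecMulVec xv2 xv2 +
    (16173870108396 : ℂ)⁻¹ • vecMulVec xv3 xv3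

lemma vMv_mul (f g f' g' : Q3 → ℂ) :
    vecMulVec f g * vecMulVec f' g' = (g ⬝ᵥ f') • vecMulVec f g' := by
  ext p q
  simp only [Matrix.mul_apply, Matrix.vecMulVec_apply, Matrix.smul_apply, dotProduct,
    smul_eq_mul, Finset.sum_mul]
  refine Finset.sum_congr rfl fun k _ => ?_
  ring

lemma trace_vMv (f g : Q3 → ℂ) : (vecMulVec f g).trace = f ⬝ᵥ g := by
  simp [Matrix.trace, Matrix.diag, Matrix.vecMulVec_apply, dotProduct]

lemma d21 : xv2 ⬝ᵥ xv1 = 0 := by rw [dotProduct_comm]; exact d12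
lemma d31 : xv3 ⬝ᵥ xv1 = 0 := by rw [dotProduct_comm]; exact d13
lemma d32 : xv3 ⬝ᵥ xv2 = 0 := by rw [dotProduct_comm]; exact d23

lemma hP2 : Pmat * Pmat = Pmat := by
  simp only [Pmat, Matrix.add_mul, Matrix.mul_add, smul_mul_assoc,
    Matrix.mul_smul, vMv_mul, d11, d22, d33, d12, d13, d21, d23, d31, d32,
    zero_smul, smul_zero, add_zero, zero_add, smul_smul]
  norm_num

lemma htrP : Pmat.trace = (3 : ℂ) := by
  simp only [Pmat, Matrix.trace_add, Matrix.trace_smul, trace_vMv, d11, d22, d33,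
    smul_eq_mul]
  norm_num

lemma hPher : Pmat.IsHermitian := by
  unfold Matrix.IsHermitian
  ext p q
  simp only [Pmat, Matrix.conjTranspose_apply, Matrix.add_apply, Matrix.smul_apply,
    Matrix.vecMulVec_apply, xv1, xv2, xv3, smul_eq_mul, star_add, star_mul',
    star_inv₀, star_ratCast, star_ofNat]
  ring


lemma trace_mul_vMv (A : Matrix Q3 Q3 ℂ) (f g : Q3 → ℂ) :
    (A * vecMulVec f g).trace = ∑ p, ∑ k, A p k * (f k * g p) := by
  simp [Matrix.trace, Matrix.diag, Matrix.mul_apply, Matrix.vecMulVec_apply]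

lemma qf1 : (∑ p : Q3, ∑ k : Q3, ((hmq p k : ℚ) : ℂ) * (xv1 k * xv1 p))
    = ((11435999/59892 : ℚ) : ℂ) := by
  simp only [xv1, ← Rat.cast_mul, ← Rat.cast_sum]
  norm_cast
  simp only [Fintype.sum_prod_type, Fin.sum_univ_two, hmq, cuq, cvq, cwq, y1]
  norm_num


lemma qf2 : (∑ p : Q3, ∑ k : Q3, ((hmq p k : ℚ) : ℂ) * (xv2 k * xv2 p))
    = ((16464943093169/1058092 : ℚ) : ℂ) := by
  simp only [xv2, ← Rat.cast_mul, ← Rat.cast_sum]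
  norm_cast
  simp only [Fintype.sum_prod_type, Fin.sum_univ_two, hmq, cuq, cvq, cwq, y2]
  norm_num

lemma qf3 : (∑ p : Q3, ∑ k : Q3, ((hmq p k : ℚ) : ℂ) * (xv3 k * xv3 p))
    = ((10088344278936804401/3174276 : ℚ) : ℂ) := by
  simp only [xv3, ← Rat.cast_mul, ← Rat.cast_sum]
  norm_cast
  simp only [Fintype.sum_prod_type, Fin.sum_univ_two, hmq, cuq, cvq, cwq, y3]
  norm_num

lemma trace_HP : (Hof uu vv ww * Pmat).trace
    = (((2431922288545 : ℝ)/2915851842288 : ℝ) : ℂ) := by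
  rw [show Hof uu vv ww = Matrix.of (fun p q => ((hmq p q : ℚ) : ℂ)) from Hof_eq]
  simp only [Pmat, Matrix.mul_add, Matrix.mul_smul, Matrix.trace_add, Matrix.trace_smul,
    trace_mul_vMv, Matrix.of_apply, qf1, qf2, qf3, smul_eq_mul]
  push_cast
  norm_num


def dqv : Q3 → ℚ := fun p => ![![![1/2, 1/6],![1/6,0]],![![1/6,0],![0,0]]] p.1 p.2.1 p.2.2

lemma hdiag : Htarget = Matrix.diagonal (fun p => ((dqv p : ℚ) : ℂ)) := by
  funext p q
  obtain ⟨a, b, c⟩ := p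
  obtain ⟨d, e, f⟩ := q
  fin_cases a <;> fin_cases b <;> fin_cases c <;> fin_cases d <;> fin_cases e <;> fin_cases f <;>
    norm_num [Htarget, embAB, embAC, embBC, P00, P0, Matrix.diagonal_apply, dqv,
      Matrix.smul_apply, Matrix.add_apply, Prod.ext_iff]

lemma diag_sub_smul_one (dd : Q3 → ℂ) (c : ℂ) :
    Matrix.diagonal dd - c • 1 = Matrix.diagonal (fun p => dd p - c) := by
  ext p q
  rcases eq_or_ne p q with h | h <;>
    simp [Matrix.diagonal_apply, Matrix.one_apply, h]

lemma hpoly : Htarget * (Htarget - (((1:ℝ)/6 : ℝ) : ℂ) • 1) *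
    (Htarget - (((1:ℝ)/2 : ℝ) : ℂ) • 1) = 0 := by
  have hz : ∀ p : Q3, ((dqv p : ℚ) : ℂ) * (((dqv p : ℚ) : ℂ) - (((1:ℝ)/6 : ℝ) : ℂ)) *
      (((dqv p : ℚ) : ℂ) - (((1:ℝ)/2 : ℝ) : ℂ)) = 0 := by
    intro p
    obtain ⟨a, b, c⟩ := p
    fin_cases a <;> fin_cases b <;> fin_cases c <;> norm_num [dqv]
  rw [hdiag, diag_sub_smul_one, diag_sub_smul_one, Matrix.diagonal_mul_diagonal,
    Matrix.diagonal_mul_diagonal]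
  ext p q
  simp only [Matrix.diagonal_apply, Matrix.zero_apply]
  split_ifs
  · exact hz p
  · rfl

lemma trace_Ht : Htarget.trace = 1 := by
  rw [hdiag, Matrix.trace_diagonal]
  simp only [Fintype.sum_prod_type, Fin.sum_univ_two, dqv]
  norm_num

lemma trace_Ht2 : (Htarget * Htarget).trace = 1/3 := by
  rw [hdiag, Matrix.diagonal_mul_diagonal, Matrix.trace_diagonal]
  simp only [Fintype.sum_prod_type, Fin.sum_univ_two, dqv]
  norm_num


lemma counting {n : Type*} [Fintype n] [DecidableEq n] (lam : n → ℝ)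
    (hmem : ∀ i, lam i = 0 ∨ lam i = 1/6 ∨ lam i = 1/2)
    (h1 : ∑ i, lam i = 1) (h2 : ∑ i, lam i ^ 2 = 1/3) :
    (∀ s : Finset n, s.card = 3 → ∑ i ∈ s, lam i ≤ 5/6) ∧
    (∃ s : Finset n, s.card = 3 ∧ ∑ i ∈ s, lam i = 5/6) := by
  classical
  have key : ∀ (s : Finset n), ∑ i ∈ s, lam i
      = (1/2) * (s.filter (fun i => lam i = 1/2)).card
        + (1/6) * (s.filter (fun i => lam i = 1/6)).card := by
    intro s
    have hpt : ∀ i ∈ s, lam i = (if lam i = 1/2 then (1/2:ℝ) else 0)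
        + (if lam i = 1/6 then (1/6:ℝ) else 0) := by
      intro i _
      rcases hmem i with h | h | h <;> rw [h] <;> norm_num
    rw [Finset.sum_congr rfl hpt, Finset.sum_add_distrib, ← Finset.sum_filter,
      ← Finset.sum_filter]
    simp [mul_comm]
  have key2 : ∑ i, lam i ^ 2
      = (1/4) * ((univ : Finset n).filter (fun i => lam i = 1/2)).card
        + (1/36) * ((univ : Finset n).filter (fun i => lam i = 1/6)).card := by
    have hpt : ∀ i ∈ (univ : Finset n), lam i ^ 2 = (if lam i = 1/2 then (1/4:ℝ) else 0)
        + (if lam i = 1/6 then (1/36:ℝ) else 0) := by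
      intro i _
      rcases hmem i with h | h | h <;> rw [h] <;> norm_num
    rw [Finset.sum_congr rfl hpt, Finset.sum_add_distrib, ← Finset.sum_filter,
      ← Finset.sum_filter]
    simp [mul_comm]
  set A := (univ : Finset n).filter (fun i => lam i = 1/2) with hA
  set B := (univ : Finset n).filter (fun i => lam i = 1/6) with hB
  have e1 := h1
  rw [key univ] at e1
  have e2 := h2
  rw [key2] at e2
  have hAcard : A.card = 1 := by
    have : (A.card : ℝ) = 1 := by linarith
    exact_mod_cast this
  have hBcard : B.card = 3 := by
    have : (B.card : ℝ) = 3 := by linarith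
    exact_mod_cast this
  constructor
  · intro s hs
    rw [key s]
    have hx : (s.filter (fun i => lam i = 1/2)).card ≤ 1 := by
      calc (s.filter (fun i => lam i = 1/2)).card ≤ A.card :=
            Finset.card_le_card (by rw [hA]; exact Finset.filter_subset_filter _ (Finset.subset_univ s))
        _ = 1 := hAcard
    have hxy : (s.filter (fun i => lam i = 1/2)).card
        + (s.filter (fun i => lam i = 1/6)).card ≤ 3 := by
      have hdisj : Disjoint (s.filter (fun i => lam i = 1/2)) (s.filter (fun i => lam i = 1/6)) := by
        rw [Finset.disjoint_left]
        intro i hi1 hi2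
        have h1' := (Finset.mem_filter.mp hi1).2
        have h2' := (Finset.mem_filter.mp hi2).2
        rw [h1'] at h2'
        norm_num at h2'
      rw [← Finset.card_union_of_disjoint hdisj]
      calc ((s.filter (fun i => lam i = 1/2)) ∪ (s.filter (fun i => lam i = 1/6))).card
          ≤ s.card := Finset.card_le_card (by
            intro i hi
            rcases Finset.mem_union.mp hi with h | h
            exacts [(Finset.mem_filter.mp h).1, (Finset.mem_filter.mp h).1])
        _ = 3 := hs
    have hxR : ((s.filter (fun i => lam i = 1/2)).card : ℝ) ≤ 1 := by exact_mod_cast hx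
    have hxyR : ((s.filter (fun i => lam i = 1/2)).card : ℝ)
        + ((s.filter (fun i => lam i = 1/6)).card : ℝ) ≤ 3 := by exact_mod_cast hxy
    linarith
  · obtain ⟨i0, hi0⟩ := Finset.card_eq_one.mp hAcard
    have hlam0 : lam i0 = 1/2 := by
      have hm : i0 ∈ A := hi0 ▸ Finset.mem_singleton_self i0
      rw [hA] at hm
      exact (Finset.mem_filter.mp hm).2
    obtain ⟨B', hB'sub, hB'card⟩ := Finset.exists_subset_card_eq (show 2 ≤ B.card by omega)
    have hi0B' : i0 ∉ B' := by
      intro h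
      have h2' : lam i0 = 1/6 := (Finset.mem_filter.mp (hB'sub h)).2
      rw [hlam0] at h2'
      norm_num at h2'
    refine ⟨insert i0 B', by rw [Finset.card_insert_of_notMem hi0B', hB'card], ?_⟩
    rw [Finset.sum_insert hi0B', hlam0]
    have hBsum : ∑ i ∈ B', lam i = ∑ _i ∈ B', (1/6:ℝ) :=
      Finset.sum_congr rfl fun i hi => (Finset.mem_filter.mp (hB'sub hi)).2
    rw [hBsum, Finset.sum_const, hB'card]
    norm_num

lemma kyFan_mem_le {n : Type*} [Fintype n] [DecidableEq n] {A : Matrix n n ℂ}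
    (hA : A.IsHermitian) (r : ℕ) (s : Finset n) (hs : s.card = r) :
    ∑ i ∈ s, hA.eigenvalues i ≤ kyFan hA r := by
  apply le_csSup
  · apply Set.Finite.bddAbove
    apply Set.Finite.subset (Set.finite_range (fun t : Finset n => ∑ i ∈ t, hA.eigenvalues i))
    rintro x ⟨t, _, rfl⟩
    exact ⟨t, rfl⟩
  · exact ⟨s, hs, rfl⟩

lemma kyFan_eq_of {n : Type*} [Fintype n] [DecidableEq n] {A : Matrix n n ℂ}
    (hA : A.IsHermitian) (r : ℕ) (b : ℝ)
    (hub : ∀ s : Finset n, s.card = r → ∑ i ∈ s, hA.eigenvalues i ≤ b)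
    (hmem : ∃ s : Finset n, s.card = r ∧ ∑ i ∈ s, hA.eigenvalues i = b) :
    kyFan hA r = b := by
  obtain ⟨s, hs, hsb⟩ := hmem
  apply IsGreatest.csSup_eq
  constructor
  · exact ⟨s, hs, hsb.symm⟩
  · rintro x ⟨t, ht, rfl⟩
    exact hub t ht

end AuxDefs


theorem stmt1 (hT : Htarget.IsHermitian) :
    kyFan hT 3 = 5/6 ∧
    ∃ u v w : Fin 2 × Fin 2 → ℂ,
      (∑ p, ‖u p‖ ^ 2 = 1) ∧ (∑ p, ‖v p‖ ^ 2 = 1) ∧ (∑ p, ‖w p‖ ^ 2 = 1) ∧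
      ∀ hH : (Hof u v w).IsHermitian, 5/6 < kyFan hH 3 ∧ ¬ Majorized hH hT := by
  have hmemv : ∀ i, hT.eigenvalues i = 0 ∨ hT.eigenvalues i = 1/6 ∨ hT.eigenvalues i = 1/2 := by
    intro i
    have h := eig_root hT ((1:ℝ)/6) ((1:ℝ)/2) hpoly i
    simpa using h
  have hsum1 : ∑ i, hT.eigenvalues i = 1 := by
    have h' : ((∑ i, hT.eigenvalues i : ℝ) : ℂ) = 1 := by
      push_cast
      rw [← trace_eq_sum_eigs hT, trace_Ht]
    exact_mod_cast h'
  have hsum2 : ∑ i, hT.eigenvalues i ^ 2 = 1/3 := by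
    have h' : ((∑ i, hT.eigenvalues i ^ 2 : ℝ) : ℂ) = 1/3 := by
      push_cast
      rw [← trace_sq_eq_sum_eigs hT, trace_Ht2]
    have h'' : ((∑ i, hT.eigenvalues i ^ 2 : ℝ) : ℂ) = (((1:ℝ)/3 : ℝ) : ℂ) := by
      rw [h']; norm_num
    have h3 := Complex.ofReal_inj.mp h''
    linarith
  obtain ⟨hub, hex⟩ := counting hT.eigenvalues hmemv hsum1 hsum2
  have hkyT : kyFan hT 3 = 5/6 := kyFan_eq_of hT 3 (5/6) hub hex
  refine ⟨hkyT, uu, vv, ww, ?_, ?_, ?_, ?_⟩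
  · simp only [uu, Fintype.sum_prod_type, Fin.sum_univ_two, cuq]
    norm_num [Complex.norm_real, Real.norm_eq_abs, div_pow, sq_abs, Real.sq_sqrt]
  · simp only [vv, Fintype.sum_prod_type, Fin.sum_univ_two, cvq]
    norm_num [Complex.norm_real, Real.norm_eq_abs, div_pow, sq_abs, Real.sq_sqrt]
  · simp only [ww, Fintype.sum_prod_type, Fin.sum_univ_two, cwq]
    norm_num [Complex.norm_real, Real.norm_eq_abs, div_pow, sq_abs, Real.sq_sqrt]
  · intro hH
    have htrP3 : Pmat.trace = ((3:ℕ) : ℂ) := by rw [htrP]; norm_num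
    obtain ⟨s, hs, hle⟩ := kyFan_trace_le hH Pmat hPher hP2 3 htrP3
    have hre : ((Hof uu vv ww * Pmat).trace).re = (2431922288545:ℝ)/2915851842288 := by
      rw [trace_HP, Complex.ofReal_re]
    have hky : 5/6 < kyFan hH 3 := by
      have h2 := kyFan_mem_le hH 3 s hs
      rw [hre] at hle
      have h3 : (5/6:ℝ) < (2431922288545:ℝ)/2915851842288 := by norm_num
      linarith
    refine ⟨hky, fun hmaj => ?_⟩
    have h3 := hmaj.1 3
    rw [hkyT] at h3
    linarith
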